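/- Define for each 1 ≤ j ≤ n functions u_j : [0,T] → ℝ satisfying u'_j(s) = μ u_j(s) + λ_s [ j (1 - k_s/(j+1)) u_{j+1}(s) - (j-1) u_j(s) ], with u_{n+1} ≡ 0, u_n(0) = n, u_j(0) = 0 for j < n, where λ ≥ 0 continuous, 0 ≤ k_s ≤ 1. Then u_j(s) ≥ 0 for all j and all s ∈ [0,T]. -/

import Mathlib

/-- If `f' = a f + b` with `b ≥ 0` on `[0,T]` and `f 0 ≥ 0`, then `f ≥ 0` on `[0,T]`. -/
lemma ode_nonneg_aux (T : ℝ) (hT : 0 ≤ T) (a : ℝ → ℝ) (ha : Continuous a)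
    (b f : ℝ → ℝ) (hb : ∀ s ∈ Set.Icc 0 T, 0 ≤ b s) (h0 : 0 ≤ f 0)
    (hf : ∀ s ∈ Set.Icc 0 T, HasDerivAt f (a s * f s + b s) s) :
    ∀ s ∈ Set.Icc 0 T, 0 ≤ f s := by
  set A : ℝ → ℝ := fun s => ∫ t in (0:ℝ)..s, a t with hA
  have hAderiv : ∀ s, HasDerivAt A (a s) s := by
    intro s
    exact intervalIntegral.integral_hasDerivAt_right (ha.intervalIntegrable 0 s)
      (ha.stronglyMeasurable.stronglyMeasurableAtFilter) ha.continuousAt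
  set g : ℝ → ℝ := fun s => f s * Real.exp (-A s) with hgdef
  have hg : ∀ s ∈ Set.Icc 0 T, HasDerivAt g (b s * Real.exp (-A s)) s := by
    intro s hs
    have h1 : HasDerivAt g ((a s * f s + b s) * Real.exp (-A s) + f s * (Real.exp (-A s) * -a s)) s :=
      (hf s hs).mul ((hAderiv s).neg.exp)
    convert h1 using 1
    ring
  have hmono : MonotoneOn g (Set.Icc 0 T) := by
    apply monotoneOn_of_deriv_nonneg (convex_Icc 0 T)
    · intro s hs
      exact (hg s hs).continuousAt.continuousWithinAt
    · intro s hs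
      rw [interior_Icc] at hs
      exact (hg s (Set.mem_Icc_of_Ioo hs)).differentiableAt.differentiableWithinAt
    · intro s hs
      rw [interior_Icc] at hs
      rw [(hg s (Set.mem_Icc_of_Ioo hs)).deriv]
      exact mul_nonneg (hb s (Set.mem_Icc_of_Ioo hs)) (Real.exp_pos _).le
  intro s hs
  have h0' : g 0 ≤ g s := hmono (Set.left_mem_Icc.2 hT) hs hs.1
  have hg0 : g 0 = f 0 := by simp [hgdef, hA]
  have hgs : 0 ≤ g s := by rw [hg0] at h0'; linarith
  have hfs : f s = g s * Real.exp (A s) := by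
    rw [hgdef]
    simp only
    rw [mul_assoc, ← Real.exp_add, neg_add_cancel, Real.exp_zero, mul_one]
  rw [hfs]
  exact mul_nonneg hgs (Real.exp_pos _).le

/-- The triangular linear ODE system for
`u_j(s) = E[L_s 1_{N_s = j}]` preserves nonnegativity. -/
theorem u_system_nonneg
    (T μ : ℝ) (hT : 0 ≤ T) (n : ℕ) (hn : 1 ≤ n)
    (l : ℝ → ℝ) (hl : Continuous l) (hl0 : ∀ t, 0 ≤ l t)
    (k : ℝ → ℝ) (hk : Continuous k) (hkb : ∀ t, 0 ≤ k t ∧ k t ≤ 1)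
    (u : ℕ → ℝ → ℝ)
    (htop : ∀ s, u (n + 1) s = 0)
    (hinit : u n 0 = n) (hinit' : ∀ j < n, u j 0 = 0)
    (hode : ∀ j, 1 ≤ j → j ≤ n → ∀ s ∈ Set.Icc 0 T,
      HasDerivAt (u j)
        (μ * u j s + l s * ((j : ℝ) * (1 - k s / (j + 1)) * u (j + 1) s
          - ((j : ℝ) - 1) * u j s)) s) :
    ∀ j, 1 ≤ j → j ≤ n → ∀ s ∈ Set.Icc 0 T, 0 ≤ u j s := by
  suffices H : ∀ d j, n - j = d → 1 ≤ j → j ≤ n → ∀ s ∈ Set.Icc 0 T, 0 ≤ u j s by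
    intro j hj1 hjn
    exact H (n - j) j rfl hj1 hjn
  intro d
  induction d using Nat.strong_induction_on with
  | _ d ih =>
    intro j hd hj1 hjn
    -- nonnegativity of the source term
    have hnext : ∀ s ∈ Set.Icc 0 T, 0 ≤ u (j + 1) s := by
      rcases eq_or_lt_of_le hjn with h | h
      · intro s _
        rw [h, htop s]
      · intro s hs
        exact ih (n - (j + 1)) (by omega) (j + 1) rfl (by omega) (by omega) s hs
    have hbnn : ∀ s ∈ Set.Icc 0 T,
        0 ≤ l s * ((j : ℝ) * (1 - k s / (j + 1)) * u (j + 1) s) := by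
      intro s hs
      apply mul_nonneg (hl0 s)
      apply mul_nonneg (mul_nonneg (by positivity) _) (hnext s hs)
      have hk1 := (hkb s).2
      have hj1' : (1 : ℝ) ≤ (j : ℝ) + 1 := by
        have : (0:ℝ) ≤ (j:ℝ) := by positivity
        linarith
      have : k s / ((j : ℝ) + 1) ≤ 1 := by
        rw [div_le_one (by linarith)]
        linarith
      linarith
    have h0 : 0 ≤ u j 0 := by
      rcases eq_or_lt_of_le hjn with h | h
      · rw [h, hinit]; positivity
      · rw [hinit' j h]
    exact ode_nonneg_aux T hT (fun s => μ - l s * ((j : ℝ) - 1))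
      (by continuity)
      (fun s => l s * ((j : ℝ) * (1 - k s / (j + 1)) * u (j + 1) s))
      (u j) hbnn h0
      (by
        intro s hs
        have := hode j hj1 hjn s hs
        convert this using 1
        ring)
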